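/- For all integers L ≥ 2 and K ≥ 2, the binary string (1)_L (0)_K (1)_L (L ones, then K zeros, then L ones), i.e., the integer B = R_L·10^{L+K} + R_L with R_L = (10^L − 1)/9, is a Papadakis–Webster binary string: there exists a positive integer D with D > rev(D) and D − rev(D) having the same number of decimal digits as D, such that the Papadakis–Webster integer produced by D equals 99·B. The same holds for the all-ones string (1)_L, i.e., B = R_L, for every L ≥ 2. -/

import Mathlib

/-- Digital reversal of a natural number (in base 10). -/
def rev (D : ℕ) : ℕ := Nat.ofDigits 10 ((Nat.digits 10 D).reverse)

/-- The length-`L` repunit `(10^L - 1)/9`, whose decimal expansion is `L` ones. -/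
def repunit (L : ℕ) : ℕ := (10 ^ L - 1) / 9

/-- `B` is a Papadakis–Webster binary string: there is a positive integer `D`
with `D > rev D` and `E = D - rev D` having the same number of decimal digits
as `D`, whose Papadakis–Webster integer `F = E + rev E` equals `99·B`. -/
def IsPWBS (B : ℕ) : Prop :=
  ∃ D : ℕ, 0 < D ∧ rev D < D ∧
    (Nat.digits 10 (D - rev D)).length = (Nat.digits 10 D).length ∧
    (D - rev D) + rev (D - rev D) = 99 * B

lemma ofDigits_rep0 (n : ℕ) : Nat.ofDigits 10 (List.replicate n 0) = 0 := by
  induction n with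
  | zero => simp
  | succ n ih => simp [List.replicate_succ, Nat.ofDigits_cons, ih]

lemma ofDigits_rep9 (n : ℕ) : Nat.ofDigits 10 (List.replicate n 9) + 1 = 10 ^ n := by
  induction n with
  | zero => simp
  | succ n ih =>
    rw [List.replicate_succ, Nat.ofDigits_cons, pow_succ]
    omega

lemma repunit_spec (n : ℕ) : 9 * repunit n + 1 = 10 ^ n := by
  have h : 10 ^ n % 9 = 1 := by rw [Nat.pow_mod]; simp
  have h2 : 1 ≤ 10 ^ n := Nat.one_le_pow _ _ (by norm_num)
  unfold repunit
  omega

lemma digits_eq_of (l : List ℕ) (h1 : ∀ d ∈ l, d < 10)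
    (h2 : ∀ h : l ≠ [], l.getLast h ≠ 0) :
    Nat.digits 10 (Nat.ofDigits 10 l) = l :=
  Nat.digits_ofDigits 10 (by norm_num) l h1 h2

lemma part1 (m k : ℕ) :
    IsPWBS (repunit (m+2) * 10 ^ ((m+2) + (k+2)) + repunit (m+2)) := by
  have h9 := ofDigits_rep9 (m+1)
  have hrep := repunit_spec (m+2)
  have hDdig : Nat.digits 10 (6 * 10 ^ (2*m+k+6) + 9 * 10 ^ (m+2))
      = (List.replicate (m+2) 0 ++ 9 :: List.replicate (m+k+3) 0) ++ [6] := by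
    have hv : Nat.ofDigits 10
        ((List.replicate (m+2) 0 ++ 9 :: List.replicate (m+k+3) 0) ++ [6])
        = 6 * 10 ^ (2*m+k+6) + 9 * 10 ^ (m+2) := by
      simp only [Nat.ofDigits_append, Nat.ofDigits_cons, Nat.ofDigits_nil,
        ofDigits_rep0, List.length_append, List.length_cons, List.length_replicate]
      ring_nf
    rw [← hv]
    exact digits_eq_of _ (by intro d hd; simp at hd; omega)
      (by intro h; rw [List.getLast_append_of_ne_nil (by simp)] <;> simp)
  have hrevD : rev (6 * 10 ^ (2*m+k+6) + 9 * 10 ^ (m+2)) = 6 + 9 * 10 ^ (m+k+4) := by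
    unfold rev
    rw [hDdig]
    simp only [List.reverse_append, List.reverse_cons, List.reverse_replicate,
      List.reverse_nil, List.nil_append, List.cons_append, List.append_assoc,
      Nat.ofDigits_append, Nat.ofDigits_cons, Nat.ofDigits_nil, ofDigits_rep0,
      List.length_append, List.length_cons, List.length_replicate]
    ring_nf
  have hEval : Nat.ofDigits 10
      ((4 :: (List.replicate (m+1) 9 ++ 8 :: (List.replicate (k+1) 0
        ++ 1 :: List.replicate (m+1) 9))) ++ [5]) + (6 + 9 * 10 ^ (m+k+4))
      = 6 * 10 ^ (2*m+k+6) + 9 * 10 ^ (m+2) := by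
    simp only [Nat.ofDigits_append, Nat.ofDigits_cons, Nat.ofDigits_nil,
      ofDigits_rep0, List.length_append, List.length_cons, List.length_replicate]
    zify at h9 ⊢
    linear_combination (10 + 1000 * (10:ℤ)^(m+1) * 10^(k+1)) * h9
  have hEdig : Nat.digits 10 (Nat.ofDigits 10
      ((4 :: (List.replicate (m+1) 9 ++ 8 :: (List.replicate (k+1) 0
        ++ 1 :: List.replicate (m+1) 9))) ++ [5]))
      = (4 :: (List.replicate (m+1) 9 ++ 8 :: (List.replicate (k+1) 0
        ++ 1 :: List.replicate (m+1) 9))) ++ [5] := by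
    refine digits_eq_of _ ?_ ?_
    · intro d hd; simp at hd; omega
    · intro h; rw [List.getLast_append_of_ne_nil (by simp)] <;> simp
  refine ⟨6 * 10 ^ (2*m+k+6) + 9 * 10 ^ (m+2), by positivity, ?_, ?_, ?_⟩
  · rw [hrevD]
    have hsplit : (10:ℕ) ^ (2*m+k+6) = 10 ^ (m+k+4) * 10 ^ (m+2) := by
      rw [← pow_add]; congr 1; omega
    rw [hsplit]
    have h1 : (100:ℕ) ≤ 10 ^ (m+2) := by
      calc (100:ℕ) = 10 ^ 2 := by norm_num
      _ ≤ 10 ^ (m+2) := Nat.pow_le_pow_right (by norm_num) (by omega)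
    have h2 : (1:ℕ) ≤ 10 ^ (m+k+4) := Nat.one_le_pow _ _ (by norm_num)
    have h3 : 6 * (10 ^ (m+k+4) * 100) ≤ 6 * (10 ^ (m+k+4) * 10 ^ (m+2)) :=
      Nat.mul_le_mul_left _ (Nat.mul_le_mul_left _ h1)
    omega
  · have hsub : 6 * 10 ^ (2*m+k+6) + 9 * 10 ^ (m+2)
        - rev (6 * 10 ^ (2*m+k+6) + 9 * 10 ^ (m+2))
        = Nat.ofDigits 10 ((4 :: (List.replicate (m+1) 9 ++ 8 :: (List.replicate (k+1) 0
        ++ 1 :: List.replicate (m+1) 9))) ++ [5]) := by omega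
    rw [hsub, hEdig, hDdig]
    simp
    omega
  · have hsub : 6 * 10 ^ (2*m+k+6) + 9 * 10 ^ (m+2)
        - rev (6 * 10 ^ (2*m+k+6) + 9 * 10 ^ (m+2))
        = Nat.ofDigits 10 ((4 :: (List.replicate (m+1) 9 ++ 8 :: (List.replicate (k+1) 0
        ++ 1 :: List.replicate (m+1) 9))) ++ [5]) := by omega
    rw [hsub]
    have hrevE : rev (Nat.ofDigits 10
        ((4 :: (List.replicate (m+1) 9 ++ 8 :: (List.replicate (k+1) 0
        ++ 1 :: List.replicate (m+1) 9))) ++ [5]))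
        = Nat.ofDigits 10 ((5 :: (List.replicate (m+1) 9 ++ 1 :: (List.replicate (k+1) 0
        ++ 8 :: List.replicate (m+1) 9))) ++ [4]) := by
      unfold rev
      rw [hEdig]
      simp [List.reverse_append]
    rw [hrevE]
    simp only [Nat.ofDigits_append, Nat.ofDigits_cons, Nat.ofDigits_nil,
      ofDigits_rep0, List.length_append, List.length_cons, List.length_replicate]
    zify at h9 hrep ⊢
    linear_combination (20 + 2000 * (10:ℤ)^(m+1) * 10^(k+1)) * h9
      + (-(11 + 1100 * (10:ℤ)^(m+1) * 10^(k+1))) * hrep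

lemma part2 (m : ℕ) : IsPWBS (repunit (m+2)) := by
  have h9 := ofDigits_rep9 (m+1)
  have hrep := repunit_spec (m+2)
  have hDdig : Nat.digits 10 (6 * 10 ^ (m+2)) = List.replicate (m+2) 0 ++ [6] := by
    have hv : Nat.ofDigits 10 (List.replicate (m+2) 0 ++ [6]) = 6 * 10 ^ (m+2) := by
      rw [Nat.ofDigits_append, ofDigits_rep0, Nat.ofDigits_singleton]
      simp [mul_comm]
    rw [← hv]
    exact digits_eq_of _ (by intro d hd; simp at hd; omega)
      (by intro h; rw [List.getLast_append_of_ne_nil (by simp)] <;> simp)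
  have hrevD : rev (6 * 10 ^ (m+2)) = 6 := by
    unfold rev
    rw [hDdig]
    simp [List.reverse_append, Nat.ofDigits_cons, ofDigits_rep0]
  have hEval : Nat.ofDigits 10 ((4 :: List.replicate (m+1) 9) ++ [5]) + 6
      = 6 * 10 ^ (m+2) := by
    rw [Nat.ofDigits_append, Nat.ofDigits_cons, Nat.ofDigits_singleton]
    simp only [List.length_cons, List.length_replicate]
    rw [pow_succ 10 (m+1)]
    omega
  have hEdig : Nat.digits 10 (Nat.ofDigits 10 ((4 :: List.replicate (m+1) 9) ++ [5]))
      = (4 :: List.replicate (m+1) 9) ++ [5] := by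
    refine digits_eq_of _ ?_ ?_
    · intro d hd; simp at hd; omega
    · intro h; rw [List.getLast_append_of_ne_nil (by simp)] <;> simp
  refine ⟨6 * 10 ^ (m+2), by positivity, ?_, ?_, ?_⟩
  · have : (100:ℕ) ≤ 10 ^ (m+2) := by
      calc (100:ℕ) = 10 ^ 2 := by norm_num
      _ ≤ 10 ^ (m+2) := Nat.pow_le_pow_right (by norm_num) (by omega)
    omega
  · have hsub : 6 * 10 ^ (m+2) - rev (6 * 10 ^ (m+2))
        = Nat.ofDigits 10 ((4 :: List.replicate (m+1) 9) ++ [5]) := by omega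
    rw [hsub, hEdig, hDdig]
    simp
  · have hsub : 6 * 10 ^ (m+2) - rev (6 * 10 ^ (m+2))
        = Nat.ofDigits 10 ((4 :: List.replicate (m+1) 9) ++ [5]) := by omega
    rw [hsub]
    have hrevE : rev (Nat.ofDigits 10 ((4 :: List.replicate (m+1) 9) ++ [5]))
        = Nat.ofDigits 10 ((5 :: List.replicate (m+1) 9) ++ [4]) := by
      unfold rev
      rw [hEdig]
      simp [List.reverse_append]
    rw [hrevE]
    simp only [Nat.ofDigits_append, Nat.ofDigits_cons, Nat.ofDigits_nil,
      List.length_append, List.length_cons, List.length_replicate]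
    rw [pow_succ 10 (m+1)] at *
    omega

/-- for all `L ≥ 2` and `K ≥ 2`, the binary string
`(1)_L (0)_K (1)_L`, i.e. `B = R_L·10^{L+K} + R_L`, is a Papadakis–Webster
binary string; so is the all-ones string `(1)_L`, i.e. `B = R_L`, for `L ≥ 2`. -/
theorem stmt14 (L K : ℕ) (hL : 2 ≤ L) (hK : 2 ≤ K) :
    IsPWBS (repunit L * 10 ^ (L + K) + repunit L) ∧ IsPWBS (repunit L) := by
  obtain ⟨m, rfl⟩ : ∃ m, L = m + 2 := ⟨L - 2, by omega⟩
  obtain ⟨k, rfl⟩ : ∃ k, K = k + 2 := ⟨K - 2, by omega⟩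
  exact ⟨part1 m k, part2 m⟩
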